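/- arXiv:1808.03043 — 2 statements merged into one kernel-verified Lean document; each statement's English description precedes it below -/
import Mathlib

section
/- If Γ is a conjunction of clauses each containing at most 2 literals (a Krom/2CNF formula), and r₁,...,r_p are truth assignments each satisfying Γ with p odd, then the majority assignment m (defined by m(x) = 1 iff a strict majority of the rᵢ set x to 1) also satisfies Γ. -/
/-- A literal over variables `V`: a variable together with a polarity. -/
abbrev Lit (V : Type) := V × Bool

/-- A literal `(v, b)` is satisfied by assignment `a` iff `a v = b`. -/
def evalLit {V : Type} (a : V → Bool) (l : Lit V) : Bool := a l.1 == l.2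

/-- An assignment satisfies a CNF formula (list of clauses, each a list of literals)
iff in every clause some literal is satisfied. -/
def satCNF {V : Type} (a : V → Bool) (φ : List (List (Lit V))) : Prop :=
  ∀ c ∈ φ, ∃ l ∈ c, evalLit a l = true

/-- If a strict majority of voters assign `b` to `v`, the majority assignment gives `b`. -/
lemma maj_of_majority {V : Type} {p : ℕ} (r : Fin p → V → Bool) (v : V) (b : Bool)
    (h : p < 2 * (Finset.univ.filter (fun i => r i v = b)).card) :
    (fun x => decide (p < 2 * (Finset.univ.filter (fun i => r i x = true)).card)) v = b := by
  have hsum : (Finset.univ.filter (fun i => r i v = true)).card +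
      (Finset.univ.filter (fun i => ¬ r i v = true)).card = p := by
    rw [Finset.card_filter_add_card_filter_not]
    simp
  cases b with
  | true => simpa using h
  | false =>
    have h' : p < 2 * (Finset.univ.filter (fun i => ¬ r i v = true)).card := by
      have : (Finset.univ.filter (fun i => r i v = false)) =
          (Finset.univ.filter (fun i => ¬ r i v = true)) := by
        apply Finset.filter_congr; intro i _; simp
      rwa [this] at h
    simp only [decide_eq_false_iff_not, not_lt]
    omega

theorem krom_majority_consistent
    (V : Type) (Γ : List (List (Lit V)))
    (hKrom : ∀ c ∈ Γ, c.length ≤ 2)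
    (p : ℕ) (hp : Odd p)
    (r : Fin p → V → Bool)
    (hr : ∀ i, satCNF (r i) Γ) :
    satCNF (fun x => decide (p < 2 * (Finset.univ.filter (fun i => r i x = true)).card)) Γ := by
  intro c hc
  have hpodd : p % 2 = 1 := Nat.odd_iff.mp hp
  have hppos : 0 < p := by omega
  -- helper: count of voters satisfying a literal
  set A := fun (l : Lit V) => (Finset.univ.filter (fun i => r i l.1 = l.2))
  have key : ∃ l ∈ c, p < 2 * (A l).card := by
    match c, hc with
    | [], hc =>
      exfalso
      obtain ⟨l, hl, _⟩ := hr ⟨0, hppos⟩ [] hc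
      exact absurd hl (List.not_mem_nil (a := l))
    | [l], hc =>
      refine ⟨l, by simp, ?_⟩
      have : (A l).card = p := by
        have : A l = Finset.univ := by
          apply Finset.eq_univ_of_forall
          intro i
          obtain ⟨l', hl', hsat⟩ := hr i [l] hc
          simp at hl'; subst hl'
          simp [A, evalLit] at hsat ⊢
          exact hsat
        simp [this]
      omega
    | [l1, l2], hc =>
      have hcover : ∀ i : Fin p, i ∈ A l1 ∪ A l2 := by
        intro i
        obtain ⟨l', hl', hsat⟩ := hr i [l1, l2] hc
        simp [evalLit] at hsat hl'
        rcases hl' with h | h <;> subst h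
        · exact Finset.mem_union_left _ (by simp [A, hsat])
        · exact Finset.mem_union_right _ (by simp [A, hsat])
      have hle : p ≤ (A l1).card + (A l2).card := by
        calc p = (Finset.univ : Finset (Fin p)).card := by simp
        _ ≤ (A l1 ∪ A l2).card := Finset.card_le_card (fun i _ => hcover i)
        _ ≤ (A l1).card + (A l2).card := Finset.card_union_le _ _
      by_cases h1 : p < 2 * (A l1).card
      · exact ⟨l1, by simp, h1⟩
      · refine ⟨l2, by simp, ?_⟩
        omega
    | l1 :: l2 :: l3 :: rest, hc =>
      exfalso
      have := hKrom _ hc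
      simp at this
  obtain ⟨l, hl, hmaj⟩ := key
  exact ⟨l, hl, by
    have := maj_of_majority r l.1 l.2 hmaj
    simp [evalLit, this]⟩
end

section
/- Let Γ be a satisfiable Boolean function over a finite linearly ordered set of 2n literals l₁ < l₂ < ... < l_{2n} (each variable appearing once positively and once negatively in the list). Define partial assignments s₀ ⊆ s₁ ⊆ ... inductively: s₀ is empty, and s_{i+1} extends sᵢ by setting lᵢ to true if sᵢ does not already set lᵢ false and the resulting partial assignment is consistent with Γ; otherwise s_{i+1} = sᵢ. Then the final partial assignment s_{2n} is a complete assignment satisfying Γ. -/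
/-- A partial assignment `α` is consistent with `Γ` if some complete assignment
extending it satisfies `Γ`. -/
def ConsistentWith {V : Type} (Γ : (V → Bool) → Bool) (α : V → Option Bool) : Prop :=
  ∃ a : V → Bool, Γ a = true ∧ ∀ v b, α v = some b → a v = b

theorem ranked_agenda_complete_and_rational
    (V : Type) [Fintype V] [DecidableEq V]
    (n : ℕ) (hn : n = Fintype.card V)
    (Γ : (V → Bool) → Bool) (hΓ : ∃ a : V → Bool, Γ a = true)
    -- the tie-broken ordering of all 2n literals: a bijective enumeration
    (L : Fin (2 * n) → V × Bool) (hL : Function.Bijective L)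
    -- the inductively defined sequence of partial assignments
    (s : ℕ → V → Option Bool)
    (hs0 : s 0 = fun _ => none)
    (hstep : ∀ i (hi : i < 2 * n),
      ((s i (L ⟨i, hi⟩).1 ≠ some (!(L ⟨i, hi⟩).2) ∧
          ConsistentWith Γ (Function.update (s i) (L ⟨i, hi⟩).1 (some (L ⟨i, hi⟩).2)) →
            s (i + 1) = Function.update (s i) (L ⟨i, hi⟩).1 (some (L ⟨i, hi⟩).2)) ∧
       (¬ (s i (L ⟨i, hi⟩).1 ≠ some (!(L ⟨i, hi⟩).2) ∧
          ConsistentWith Γ (Function.update (s i) (L ⟨i, hi⟩).1 (some (L ⟨i, hi⟩).2))) →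
            s (i + 1) = s i))) :
    ∃ a : V → Bool, (∀ v, s (2 * n) v = some (a v)) ∧ Γ a = true := by
  -- one-step monotonicity
  have mono1 : ∀ i, i < 2*n → ∀ v b, s i v = some b → s (i+1) v = some b := by
    intro i hi v b hvb
    obtain ⟨h1, h2⟩ := hstep i hi
    by_cases hc : s i (L ⟨i, hi⟩).1 ≠ some (!(L ⟨i, hi⟩).2) ∧
        ConsistentWith Γ (Function.update (s i) (L ⟨i, hi⟩).1 (some (L ⟨i, hi⟩).2))
    · rw [h1 hc]
      rcases eq_or_ne v (L ⟨i, hi⟩).1 with rfl | hne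
      · rw [Function.update_self]
        have hne' := hc.1
        rw [hvb] at hne'
        have hb : b = (L ⟨i, hi⟩).2 := by
          by_contra hb
          exact hne' (by cases b <;> cases (L ⟨i, hi⟩).2 <;> simp_all)
        rw [hb]
      · rw [Function.update_of_ne hne]; exact hvb
    · rw [h2 hc]; exact hvb
  -- monotonicity
  have mono : ∀ j, j ≤ 2*n → ∀ i, i ≤ j → ∀ v b, s i v = some b → s j v = some b := by
    intro j
    induction j with
    | zero => intro _ i hi v b h; obtain rfl : i = 0 := Nat.le_zero.mp hi; exact h
    | succ k ih =>
      intro hk i hi v b h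
      rcases eq_or_lt_of_le hi with rfl | hik
      · exact h
      · exact mono1 k (by omega) v b (ih (by omega) i (by omega) v b h)
  -- consistency invariant
  have cons : ∀ i, i ≤ 2*n → ConsistentWith Γ (s i) := by
    intro i
    induction i with
    | zero =>
      intro _
      obtain ⟨a, ha⟩ := hΓ
      exact ⟨a, ha, fun v b h => by rw [hs0] at h; simp at h⟩
    | succ k ih =>
      intro hk
      obtain ⟨h1, h2⟩ := hstep k (by omega)
      by_cases hc : s k (L ⟨k, by omega⟩).1 ≠ some (!(L ⟨k, by omega⟩).2) ∧
          ConsistentWith Γ (Function.update (s k) (L ⟨k, by omega⟩).1 (some (L ⟨k, by omega⟩).2))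
      · rw [h1 hc]; exact hc.2
      · rw [h2 hc]; exact ih (by omega)
  -- every variable is decided at the end
  have defined : ∀ v : V, ∃ b, s (2*n) v = some b := by
    intro v
    -- helper claim
    have claim : ∀ (i j : Fin (2*n)) (b : Bool), (i : ℕ) < (j : ℕ) →
        L i = (v, !b) → L j = (v, b) → ∃ c, s (2*n) v = some c := by
      intro i j b hij hLi hLj
      rcases hsj : s (j : ℕ) v with _ | c
      · -- s j v = none
        obtain ⟨a, ha, hext⟩ := cons (j : ℕ) (le_of_lt j.2)
        by_cases hav : a v = b
        · -- can set v := b at step j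
          have hcons : ConsistentWith Γ (Function.update (s (j : ℕ)) v (some b)) := by
            refine ⟨a, ha, fun v' b' h => ?_⟩
            rcases eq_or_ne v' v with rfl | hne
            · rw [Function.update_self] at h
              rw [hav]; exact (Option.some.injEq _ _ ▸ h).symm ▸ rfl
            · rw [Function.update_of_ne hne] at h
              exact hext v' b' h
          obtain ⟨h1, _⟩ := hstep (j : ℕ) j.2
          have hLj' : L ⟨(j : ℕ), j.2⟩ = (v, b) := by rw [Fin.eta]; exact hLj
          rw [hLj'] at h1
          have hs' : s ((j : ℕ) + 1) = Function.update (s (j : ℕ)) v (some b) := by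
            apply h1
            exact ⟨by rw [hsj]; simp, hcons⟩
          refine ⟨b, mono (2*n) le_rfl ((j : ℕ) + 1) j.2 v b ?_⟩
          rw [hs', Function.update_self]
        · -- a v = !b ; derive contradiction at step i
          have hav' : a v = !b := by cases hb : a v <;> cases b <;> simp_all
          have hsi : s (i : ℕ) v = none := by
            rcases h : s (i : ℕ) v with _ | c
            · rfl
            · exact absurd (mono (j : ℕ) (le_of_lt j.2) (i : ℕ) (le_of_lt hij) v c h)
                (by rw [hsj]; simp)
          have hcons : ConsistentWith Γ (Function.update (s (i : ℕ)) v (some (!b))) := by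
            refine ⟨a, ha, fun v' b' h => ?_⟩
            rcases eq_or_ne v' v with rfl | hne
            · rw [Function.update_self] at h
              rw [hav']; exact (Option.some.injEq _ _ ▸ h).symm ▸ rfl
            · rw [Function.update_of_ne hne] at h
              exact hext v' b' (mono (j : ℕ) (le_of_lt j.2) (i : ℕ) (le_of_lt hij) v' b' h)
          obtain ⟨h1, _⟩ := hstep (i : ℕ) i.2
          have hLi' : L ⟨(i : ℕ), i.2⟩ = (v, !b) := by rw [Fin.eta]; exact hLi
          rw [hLi'] at h1
          have hs' : s ((i : ℕ) + 1) = Function.update (s (i : ℕ)) v (some (!b)) := by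
            apply h1
            exact ⟨by rw [hsi]; simp, hcons⟩
          have : s (j : ℕ) v = some (!b) := by
            apply mono (j : ℕ) (le_of_lt j.2) ((i : ℕ) + 1) hij v (!b)
            rw [hs', Function.update_self]
          rw [hsj] at this; simp at this
      · exact ⟨c, mono (2*n) le_rfl (j : ℕ) (le_of_lt j.2) v c hsj⟩
    obtain ⟨i₁, hi₁⟩ := hL.2 (v, true)
    obtain ⟨i₀, hi₀⟩ := hL.2 (v, false)
    have hne : i₁ ≠ i₀ := by
      intro h; rw [h, hi₀] at hi₁; simp at hi₁
    rcases lt_or_gt_of_ne (Fin.val_ne_of_ne hne) with h | h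
    · exact claim i₁ i₀ false h (by simpa using hi₁) hi₀
    · exact claim i₀ i₁ true h (by simpa using hi₀) hi₁
  obtain ⟨a, ha, hext⟩ := cons (2*n) le_rfl
  refine ⟨a, fun v => ?_, ha⟩
  obtain ⟨b, hb⟩ := defined v
  rw [hb, hext v b hb]
end
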